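/- With the Fock space operators e_i^∞, f_i^∞ as above, for every extended Young diagram Y of charge n and integers i, j with |i − j| > 1, e_i^∞ e_j^∞ Y = e_j^∞ e_i^∞ Y and f_i^∞ f_j^∞ Y = f_j^∞ f_i^∞ Y. -/

import Mathlib

noncomputable section
open scoped Classical

abbrev K : Type := FractionRing (MvPolynomial (Fin 2) ℚ)

def rr : K := algebraMap (MvPolynomial (Fin 2) ℚ) K (MvPolynomial.X 0)
def ss : K := algebraMap (MvPolynomial (Fin 2) ℚ) K (MvPolynomial.X 1)

/-- An extended Young diagram of charge `n`: a weakly increasing integer sequence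
eventually equal to `n`. -/
structure EYD (n : ℤ) where
  y : ℕ → ℤ
  mono : ∀ k, y k ≤ y (k + 1)
  charge : ∃ N, ∀ k, N ≤ k → y k = n

namespace EYD

variable {n : ℤ}

/-- `Y` has a convex corner on diagonal `i` at column `k`. -/
def ConvexAt (Y : EYD n) (i : ℤ) (k : ℕ) : Prop :=
  Y.y k < Y.y (k + 1) ∧ Y.y k + k + 1 = i

/-- `Y` has a concave corner on diagonal `i` at column `k`. -/
def ConcaveAt (Y : EYD n) (i : ℤ) (k : ℕ) : Prop :=
  (k = 0 ∨ ∃ j, k = j + 1 ∧ Y.y j < Y.y k) ∧ Y.y k + k = i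

/-- Replace the convex corner at column `k` by a concave one. -/
def up (Y : EYD n) (k : ℕ) (h : Y.y k < Y.y (k + 1)) : EYD n where
  y := Function.update Y.y k (Y.y k + 1)
  mono := by
    intro m
    rcases eq_or_ne m k with rfl | h1
    · rw [Function.update_self, Function.update_of_ne (show m + 1 ≠ m by omega)]
      omega
    · rcases eq_or_ne (m + 1) k with h2 | h2
      · have hm := Y.mono m
        rw [Function.update_of_ne h1, h2, Function.update_self, ← h2]
        omega
      · rw [Function.update_of_ne h1, Function.update_of_ne h2]
        exact Y.mono m
  charge := by
    obtain ⟨N, hN⟩ := Y.charge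
    exact ⟨max N (k + 1), fun m hm => by
      rw [Function.update_of_ne (show m ≠ k by omega)]
      exact hN m (by omega)⟩

/-- Replace the concave corner at column `k` by a convex one. -/
def down (Y : EYD n) (k : ℕ) (h : k = 0 ∨ ∃ j, k = j + 1 ∧ Y.y j < Y.y k) : EYD n where
  y := Function.update Y.y k (Y.y k - 1)
  mono := by
    intro m
    rcases eq_or_ne m k with rfl | h1
    · rw [Function.update_self, Function.update_of_ne (show m + 1 ≠ m by omega)]
      have := Y.mono m
      omega
    · rcases eq_or_ne (m + 1) k with h2 | h2
      · rw [Function.update_of_ne h1, h2, Function.update_self]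
        rcases h with h | ⟨j, hj, hjy⟩
        · omega
        · have : j = m := by omega
          subst this
          omega
      · rw [Function.update_of_ne h1, Function.update_of_ne h2]
        exact Y.mono m
  charge := by
    obtain ⟨N, hN⟩ := Y.charge
    exact ⟨max N (k + 1), fun m hm => by
      rw [Function.update_of_ne (show m ≠ k by omega)]
      exact hN m (by omega)⟩

/-- The action of `e_i^∞` on a diagram: turn the convex corner on diagonal `i`
into a concave one, if any. -/
def eAct (i : ℤ) (Y : EYD n) : Option (EYD n) :=
  if h : ∃ k, Y.ConvexAt i k then some (Y.up h.choose h.choose_spec.1) else none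

/-- The action of `f_i^∞` on a diagram: turn the concave corner on diagonal `i`
into a convex one, if any. -/
def fAct (i : ℤ) (Y : EYD n) : Option (EYD n) :=
  if h : ∃ k, Y.ConcaveAt i k then some (Y.down h.choose h.choose_spec.1) else none

end EYD

/-- The Fock space of charge `n`. -/
abbrev Fock (n : ℤ) : Type := EYD n →₀ K

def ovec {n : ℤ} (o : Option (EYD n)) : Fock n :=
  o.elim 0 fun Y => Finsupp.single Y 1

/-- The linear operator on Fock space induced by a partially defined map on diagrams. -/
def opOf {n : ℤ} (a : EYD n → Option (EYD n)) : Fock n →ₗ[K] Fock n :=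
  Finsupp.lsum K fun Y => LinearMap.smulRight (LinearMap.id : K →ₗ[K] K) (ovec (a Y))

/-- A diagonal operator on Fock space. -/
def diagOp {n : ℤ} (c : EYD n → K) : Fock n →ₗ[K] Fock n :=
  Finsupp.lsum K fun Y => LinearMap.smulRight (LinearMap.id : K →ₗ[K] K) (c Y • Finsupp.single Y 1)

def Eop (n i : ℤ) : Fock n →ₗ[K] Fock n := opOf (EYD.eAct i)
def Fop (n i : ℤ) : Fock n →ₗ[K] Fock n := opOf (EYD.fAct i)

namespace EYD

variable {n : ℤ}

theorem ext' {Y Z : EYD n} (h : Y.y = Z.y) : Y = Z := by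
  cases Y; cases Z; simp_all

theorem diag_strictMono (Y : EYD n) : StrictMono (fun k : ℕ => Y.y k + k) := by
  apply strictMono_nat_of_lt_succ
  intro k
  have := Y.mono k
  push_cast
  omega

theorem convex_unique {Y : EYD n} {i : ℤ} {k m : ℕ}
    (hk : Y.ConvexAt i k) (hm : Y.ConvexAt i m) : k = m := by
  apply Y.diag_strictMono.injective
  have := hk.2; have := hm.2
  simp only []
  omega

theorem concave_unique {Y : EYD n} {i : ℤ} {k m : ℕ}
    (hk : Y.ConcaveAt i k) (hm : Y.ConcaveAt i m) : k = m := by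
  apply Y.diag_strictMono.injective
  have := hk.2; have := hm.2
  simp only []
  omega

theorem up_convex_iff {Y : EYD n} {j : ℤ} {k : ℕ} (hc : Y.ConvexAt j k)
    {i : ℤ} (hij : 1 < |i - j|) (m : ℕ) :
    (Y.up k hc.1).ConvexAt i m ↔ Y.ConvexAt i m := by
  have h2 : 1 < i - j ∨ 1 < j - i := by
    rcases lt_abs.mp hij with h | h
    · left; omega
    · right; omega
  obtain ⟨hlt, hd⟩ := hc
  rcases eq_or_ne m k with rfl | hmk
  · simp only [ConvexAt, up, Function.update_self,
      Function.update_of_ne (show m + 1 ≠ m by omega)]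
    omega
  · rcases eq_or_ne (m + 1) k with hmk1 | hmk1
    · subst hmk1
      have hym : Y.y m ≤ Y.y (m + 1) := Y.mono m
      simp only [ConvexAt, up, Function.update_of_ne hmk, Function.update_self]
      omega
    · simp only [ConvexAt, up, Function.update_of_ne hmk, Function.update_of_ne hmk1]

theorem down_concave_iff {Y : EYD n} {j : ℤ} {k : ℕ} (hc : Y.ConcaveAt j k)
    {i : ℤ} (hij : 1 < |i - j|) (m : ℕ) :
    (Y.down k hc.1).ConcaveAt i m ↔ Y.ConcaveAt i m := by
  have h2 : 1 < i - j ∨ 1 < j - i := by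
    rcases lt_abs.mp hij with h | h
    · left; omega
    · right; omega
  obtain ⟨hk0, hd⟩ := hc
  rcases eq_or_ne m k with rfl | hmk
  · constructor <;> rintro ⟨-, hdm⟩ <;> exfalso
    · simp only [down, Function.update_self] at hdm
      omega
    · omega
  · rcases eq_or_ne m (k + 1) with rfl | hmk1
    · have key : (Y.down k hk0).y k = Y.y k - 1 := Function.update_self _ _ _
      have hy : (Y.down k hk0).y (k + 1) = Y.y (k + 1) := Function.update_of_ne hmk _ _
      have hmono := Y.mono k
      constructor
      · rintro ⟨h1, hdm⟩
        rw [hy] at hdm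
        refine ⟨Or.inr ⟨k, rfl, ?_⟩, hdm⟩
        rcases h1 with h1 | ⟨p, hp, hplt⟩
        · omega
        · have hpk : p = k := by omega
          subst hpk
          rw [key, hy] at hplt
          omega
      · rintro ⟨h1, hdm⟩
        refine ⟨Or.inr ⟨k, rfl, ?_⟩, by rw [hy]; exact hdm⟩
        rw [key, hy]
        rcases h1 with h1 | ⟨p, hp, hplt⟩
        · omega
        · have hpk : p = k := by omega
          subst hpk
          omega
    · have hy : (Y.down k hk0).y m = Y.y m := Function.update_of_ne hmk _ _
      constructor <;> rintro ⟨h1, hdm⟩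
      · rw [hy] at hdm
        refine ⟨?_, hdm⟩
        rcases h1 with h1 | ⟨p, hp, hplt⟩
        · exact Or.inl h1
        · refine Or.inr ⟨p, hp, ?_⟩
          have hpy : (Y.down k hk0).y p = Y.y p := Function.update_of_ne (by omega) _ _
          rw [hpy, hy] at hplt
          exact hplt
      · refine ⟨?_, by rw [hy]; exact hdm⟩
        rcases h1 with h1 | ⟨p, hp, hplt⟩
        · exact Or.inl h1
        · refine Or.inr ⟨p, hp, ?_⟩
          have hpy : (Y.down k hk0).y p = Y.y p := Function.update_of_ne (by omega) _ _
          rw [hpy, hy]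
          exact hplt

theorem eAct_eq_some {Y : EYD n} {i : ℤ} {k : ℕ} (hk : Y.ConvexAt i k) :
    Y.eAct i = some (Y.up k hk.1) := by
  have hex : ∃ m, Y.ConvexAt i m := ⟨k, hk⟩
  rw [eAct, dif_pos hex]
  congr 1
  apply ext'
  have hck : hex.choose = k := convex_unique hex.choose_spec hk
  simp only [up, hck]

theorem eAct_eq_none {Y : EYD n} {i : ℤ} (h : ¬∃ k, Y.ConvexAt i k) :
    Y.eAct i = none := dif_neg h

theorem fAct_eq_some {Y : EYD n} {i : ℤ} {k : ℕ} (hk : Y.ConcaveAt i k) :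
    Y.fAct i = some (Y.down k hk.1) := by
  have hex : ∃ m, Y.ConcaveAt i m := ⟨k, hk⟩
  rw [fAct, dif_pos hex]
  congr 1
  apply ext'
  have hck : hex.choose = k := concave_unique hex.choose_spec hk
  simp only [down, hck]

theorem fAct_eq_none {Y : EYD n} {i : ℤ} (h : ¬∃ k, Y.ConcaveAt i k) :
    Y.fAct i = none := dif_neg h

end EYD

theorem opOf_single {n : ℤ} (a : EYD n → Option (EYD n)) (Y : EYD n) :
    opOf a (Finsupp.single Y 1) = ovec (a Y) := by
  rw [opOf, Finsupp.lsum_single, LinearMap.smulRight_apply, LinearMap.id_apply, one_smul]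

theorem opOf_ovec {n : ℤ} (a : EYD n → Option (EYD n)) (o : Option (EYD n)) :
    opOf a (ovec o) = o.elim 0 (fun Z => ovec (a Z)) := by
  cases o with
  | none => simp [ovec]
  | some Z => exact opOf_single a Z

/-- For `|i − j| > 1`, the Fock space operators `e_i^∞, e_j^∞` commute, and so do
`f_i^∞, f_j^∞`, on every basis vector. -/
theorem stmt_10 (n i j : ℤ) (hij : 1 < |i - j|) (Y : EYD n) :
    Eop n i (Eop n j (Finsupp.single Y 1)) = Eop n j (Eop n i (Finsupp.single Y 1)) ∧
    Fop n i (Fop n j (Finsupp.single Y 1)) = Fop n j (Fop n i (Finsupp.single Y 1)) := by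
  have hij' : 1 < |j - i| := by rw [abs_sub_comm]; exact hij
  constructor
  · rw [show Eop n j (Finsupp.single Y 1) = ovec (Y.eAct j) from opOf_single _ Y,
       show Eop n i (Finsupp.single Y 1) = ovec (Y.eAct i) from opOf_single _ Y,
       show Eop n i (ovec (Y.eAct j)) = (Y.eAct j).elim 0 (fun Z => ovec (Z.eAct i)) from
         opOf_ovec _ _,
       show Eop n j (ovec (Y.eAct i)) = (Y.eAct i).elim 0 (fun Z => ovec (Z.eAct j)) from
         opOf_ovec _ _]
    by_cases hj : ∃ k, Y.ConvexAt j k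
    · obtain ⟨kj, hkj⟩ := hj
      by_cases hi : ∃ k, Y.ConvexAt i k
      · obtain ⟨ki, hki⟩ := hi
        have hne : ki ≠ kj := by
          intro h
          subst h
          have := hki.2; have := hkj.2
          have := lt_abs.mp hij
          omega
        have hki' : (Y.up kj hkj.1).ConvexAt i ki := (EYD.up_convex_iff hkj hij ki).mpr hki
        have hkj' : (Y.up ki hki.1).ConvexAt j kj := (EYD.up_convex_iff hki hij' kj).mpr hkj
        rw [EYD.eAct_eq_some hkj, EYD.eAct_eq_some hki]
        simp only [Option.elim]
        rw [EYD.eAct_eq_some hki', EYD.eAct_eq_some hkj']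
        refine congrArg _ (congrArg some (EYD.ext' ?_))
        simp only [EYD.up, Function.update_of_ne hne, Function.update_of_ne hne.symm]
        exact Function.update_comm hne.symm _ _ _
      · rw [EYD.eAct_eq_some hkj, EYD.eAct_eq_none hi]
        simp only [Option.elim]
        rw [EYD.eAct_eq_none (fun ⟨m, hm⟩ => hi ⟨m, (EYD.up_convex_iff hkj hij m).mp hm⟩)]
        rfl
    · by_cases hi : ∃ k, Y.ConvexAt i k
      · obtain ⟨ki, hki⟩ := hi
        rw [EYD.eAct_eq_none hj, EYD.eAct_eq_some hki]
        simp only [Option.elim]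
        rw [EYD.eAct_eq_none (fun ⟨m, hm⟩ => hj ⟨m, (EYD.up_convex_iff hki hij' m).mp hm⟩)]
        rfl
      · rw [EYD.eAct_eq_none hj, EYD.eAct_eq_none hi]
        rfl
  · rw [show Fop n j (Finsupp.single Y 1) = ovec (Y.fAct j) from opOf_single _ Y,
       show Fop n i (Finsupp.single Y 1) = ovec (Y.fAct i) from opOf_single _ Y,
       show Fop n i (ovec (Y.fAct j)) = (Y.fAct j).elim 0 (fun Z => ovec (Z.fAct i)) from
         opOf_ovec _ _,
       show Fop n j (ovec (Y.fAct i)) = (Y.fAct i).elim 0 (fun Z => ovec (Z.fAct j)) from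
         opOf_ovec _ _]
    by_cases hj : ∃ k, Y.ConcaveAt j k
    · obtain ⟨kj, hkj⟩ := hj
      by_cases hi : ∃ k, Y.ConcaveAt i k
      · obtain ⟨ki, hki⟩ := hi
        have hne : ki ≠ kj := by
          intro h
          subst h
          have := hki.2; have := hkj.2
          have := lt_abs.mp hij
          omega
        have hki' : (Y.down kj hkj.1).ConcaveAt i ki := (EYD.down_concave_iff hkj hij ki).mpr hki
        have hkj' : (Y.down ki hki.1).ConcaveAt j kj := (EYD.down_concave_iff hki hij' kj).mpr hkj
        rw [EYD.fAct_eq_some hkj, EYD.fAct_eq_some hki]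
        simp only [Option.elim]
        rw [EYD.fAct_eq_some hki', EYD.fAct_eq_some hkj']
        refine congrArg _ (congrArg some (EYD.ext' ?_))
        simp only [EYD.down, Function.update_of_ne hne, Function.update_of_ne hne.symm]
        exact Function.update_comm hne.symm _ _ _
      · rw [EYD.fAct_eq_some hkj, EYD.fAct_eq_none hi]
        simp only [Option.elim]
        rw [EYD.fAct_eq_none (fun ⟨m, hm⟩ => hi ⟨m, (EYD.down_concave_iff hkj hij m).mp hm⟩)]
        rfl
    · by_cases hi : ∃ k, Y.ConcaveAt i k
      · obtain ⟨ki, hki⟩ := hi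
        rw [EYD.fAct_eq_none hj, EYD.fAct_eq_some hki]
        simp only [Option.elim]
        rw [EYD.fAct_eq_none (fun ⟨m, hm⟩ => hj ⟨m, (EYD.down_concave_iff hki hij' m).mp hm⟩)]
        rfl
      · rw [EYD.fAct_eq_none hj, EYD.fAct_eq_none hi]
        rfl
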